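/- Let ρ and σ be faithful states of M, ω_N a faithful state of N, and set ω := R_ρ(ω_N) = ρ^{1/2} ρ_N^{−1/2} ω_N ρ_N^{−1/2} ρ^{1/2}, which is a faithful state of M. Then for all a, b ∈ N: tr( (a ρ_N^{−1/2} ρ^{1/2})* · σ · (b ρ_N^{−1/2} ρ^{1/2}) · ω⁻¹ ) = tr( a* σ_N b ω_N⁻¹ ). Equivalently, V_ρ* ∘ Δ_M(σ, ω) ∘ V_ρ = Δ_N(σ_N, ω_N), where V_ρ : N → M is the Hilbert–Schmidt isometry y ↦ y ρ_N^{−1/2} ρ^{1/2}, Δ_M(σ,ω)(x) := σ x ω⁻¹, and Δ_N(σ_N,ω_N)(y) := σ_N y ω_N⁻¹. -/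

import Mathlib

open scoped ComplexOrder
open MeasureTheory Matrix

namespace QFDiv

/-- `Mat n` is the matrix algebra `Mₙ(ℂ)`. -/
abbrev Mat (n : ℕ) := Matrix (Fin n) (Fin n) ℂ

/-- Hilbert–Schmidt inner product `⟨x, y⟩ = tr(x* y)`. -/
noncomputable def hsInner {n : ℕ} (x y : Mat n) : ℂ := (xᴴ * y).trace

/-- Hilbert–Schmidt norm `‖x‖₂ = tr(x* x)^{1/2}`. -/
noncomputable def hsNorm {n : ℕ} (x : Mat n) : ℝ := Real.sqrt ((xᴴ * x).trace.re)

/-- Trace norm `‖x‖₁ = tr((x* x)^{1/2})`. -/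
noncomputable def traceNorm {n : ℕ} (x : Mat n) : ℝ :=
  (((Matrix.posSemidef_conjTranspose_mul_self x).1.eigenvectorUnitary : Mat n) *
    Matrix.diagonal (fun i => ((Real.sqrt ((Matrix.posSemidef_conjTranspose_mul_self x).1.eigenvalues i) : ℝ) : ℂ)) *
    (star (Matrix.posSemidef_conjTranspose_mul_self x).1.eigenvectorUnitary : Mat n)).trace.re

/-- Operator norm `‖x‖_∞` (as an operator on the Euclidean space `ℂⁿ`). -/
noncomputable def opNorm {n : ℕ} (x : Mat n) : ℝ :=
  ‖Matrix.toEuclideanCLM (𝕜 := ℂ) x‖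

/-- Complex matrix power `A^z := exp(z · log A)` for Hermitian (in particular positive
definite) `A`, defined by the spectral functional calculus; junk value `0` otherwise. -/
noncomputable def mpow {n : ℕ} (A : Mat n) (z : ℂ) : Mat n :=
  if h : A.IsHermitian then
    (h.eigenvectorUnitary : Mat n) *
      Matrix.diagonal (fun i => (h.eigenvalues i : ℂ) ^ z) *
      star (h.eigenvectorUnitary : Mat n)
  else 0

/-- Matrix logarithm via the spectral functional calculus. -/
noncomputable def mlog {n : ℕ} (A : Mat n) : Mat n :=
  if h : A.IsHermitian then
    (h.eigenvectorUnitary : Mat n) *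
      Matrix.diagonal (fun i => (Real.log (h.eigenvalues i) : ℂ)) *
      star (h.eigenvectorUnitary : Mat n)
  else 0

/-- `f(Δ(σ,ω))(x)`, where `Δ(σ,ω) : y ↦ σ y ω⁻¹` is the relative modular operator on the
Hilbert–Schmidt space and `f(Δ(σ,ω))` is its functional calculus:  writing `σ = U diag(s) U*`
and `ω = V diag(w) V*`, the operator `Δ(σ,ω)` has orthonormal eigenvectors `U Eᵢⱼ V*` with
eigenvalues `sᵢ/wⱼ`, so `f(Δ(σ,ω))(x) = U (f(sᵢ/wⱼ) ⊙ (U* x V)) V*`. -/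
noncomputable def modApply {n : ℕ} (f : ℝ → ℝ) (σ ω : Mat n) (x : Mat n) : Mat n :=
  if hσ : σ.IsHermitian then
    if hω : ω.IsHermitian then
      (hσ.eigenvectorUnitary : Mat n) *
        Matrix.of (fun i j =>
          (f (hσ.eigenvalues i / hω.eigenvalues j) : ℂ) *
            ((star (hσ.eigenvectorUnitary : Mat n) * x * (hω.eigenvectorUnitary : Mat n)) i j)) *
        star (hω.eigenvectorUnitary : Mat n)
    else 0
  else 0

/-- Standard `f`-divergence `Q_f(ρ‖σ) = ⟨ρ^{1/2}, f(Δ(σ,ρ))(ρ^{1/2})⟩`. -/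
noncomputable def Qf {n : ℕ} (f : ℝ → ℝ) (ρ σ : Mat n) : ℝ :=
  (hsInner (mpow ρ (1/2)) (modApply f σ ρ (mpow ρ (1/2)))).re

/-- Optimized `f`-divergence `Q̃_f(ρ‖σ) = sup_ω ⟨ρ^{1/2}, f(Δ(σ,ω))(ρ^{1/2})⟩`, where the
supremum runs over all faithful states `ω` of `Mₙ(ℂ)`. -/
noncomputable def Qopt {n : ℕ} (f : ℝ → ℝ) (ρ σ : Mat n) : ℝ :=
  ⨆ ω : {ω : Mat n // ω.PosDef ∧ ω.trace = 1},
    (hsInner (mpow ρ (1/2)) (modApply f σ ω.1 (mpow ρ (1/2)))).re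

/-- Optimized `f`-divergence on the subalgebra `N`: the supremum runs over the faithful
states `ω` of `N`. -/
noncomputable def QoptN {n : ℕ} (f : ℝ → ℝ) (N : StarSubalgebra ℂ (Mat n)) (ρ σ : Mat n) : ℝ :=
  ⨆ ω : {ω : Mat n // ω ∈ N ∧ ω.PosDef ∧ ω.trace = 1},
    (hsInner (mpow ρ (1/2)) (modApply f σ ω.1 (mpow ρ (1/2)))).re

/-- Umegaki relative entropy `D(ρ‖σ) = tr(ρ (log ρ − log σ))`. -/
noncomputable def relEnt {n : ℕ} (ρ σ : Mat n) : ℝ := ((ρ * (mlog ρ - mlog σ)).trace).re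

/-- `Q_{x²}(ρ‖σ) = tr(ρ⁻¹ σ²)`. -/
noncomputable def Qsq {n : ℕ} (ρ σ : Mat n) : ℝ := ((ρ⁻¹ * (σ * σ)).trace).re

/-- `Q_{x⁻¹}(ρ‖σ) = tr(ρ² σ⁻¹)`. -/
noncomputable def Qxinv {n : ℕ} (ρ σ : Mat n) : ℝ := ((ρ * ρ * σ⁻¹).trace).re

/-- Petz–Rényi relative quasi-entropy `Q_s(ρ‖σ) = tr(ρ^{1−s} σ^s)`. -/
noncomputable def Qs {n : ℕ} (s : ℝ) (ρ σ : Mat n) : ℝ :=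
  ((mpow ρ (1 - (s : ℂ)) * mpow σ (s : ℂ)).trace).re

/-- Petz–Rényi relative entropy `D_α(ρ‖σ) = (α−1)⁻¹ log tr(ρ^α σ^{1−α})`. -/
noncomputable def petzRenyi {n : ℕ} (α : ℝ) (ρ σ : Mat n) : ℝ :=
  (α - 1)⁻¹ * Real.log (((mpow ρ (α : ℂ) * mpow σ (1 - (α : ℂ))).trace).re)

/-- Sandwiched Rényi relative quasi-entropy
`Q̃_α(ρ‖σ) = (tr[(ρ^{1/2} σ^{−1/α'} ρ^{1/2})^α])^{1/α}` with `α' = α/(α−1)`,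
so that `−1/α' = (1−α)/α`. -/
noncomputable def sandQ {n : ℕ} (α : ℝ) (ρ σ : Mat n) : ℝ :=
  (((mpow (mpow ρ (1/2) * mpow σ (((1 - α)/α : ℝ) : ℂ) * mpow ρ (1/2)) (α : ℂ)).trace).re)
    ^ (1/α)

/-- Sandwiched Rényi relative entropy `D̃_α(ρ‖σ) = α' log Q̃_α(ρ‖σ)`. -/
noncomputable def sandD {n : ℕ} (α : ℝ) (ρ σ : Mat n) : ℝ :=
  (α/(α-1)) * Real.log (sandQ α ρ σ)

/-- Rotated Petz recovery map
`R_ρ^t(x) = ρ^{1/2−it} ρ_N^{−1/2+it} x ρ_N^{−1/2−it} ρ^{1/2+it}` (here `ρN` is the matrix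
`ρ_N = E(ρ)`). -/
noncomputable def rotPetz {n : ℕ} (ρ ρN : Mat n) (t : ℝ) (x : Mat n) : Mat n :=
  mpow ρ (1/2 - Complex.I * t) * mpow ρN (-(1/2) + Complex.I * t) * x *
    mpow ρN (-(1/2) - Complex.I * t) * mpow ρ (1/2 + Complex.I * t)

/-- The probability measure `dβ(t) = (π/2)(cosh(πt)+1)⁻¹ dt` on `ℝ`. -/
noncomputable def betaMeasure : Measure ℝ :=
  volume.withDensity fun t => ENNReal.ofReal (Real.pi / 2 * (Real.cosh (Real.pi * t) + 1)⁻¹)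

/-- Universal Petz recovery map `R_ρ^u(x) = ∫_ℝ R_ρ^{t/2}(x) dβ(t)` (Bochner integral,
computed entrywise). -/
noncomputable def univPetz {n : ℕ} (ρ ρN : Mat n) (x : Mat n) : Mat n :=
  Matrix.of fun i j => ∫ t : ℝ, rotPetz ρ ρN (t/2) x i j ∂betaMeasure

/-- `E` is the trace-preserving conditional expectation onto the subalgebra `N`, i.e. the
orthogonal projection of `Mₙ(ℂ)` onto `N` for the Hilbert–Schmidt inner product. -/
def IsCondExp {n : ℕ} (N : StarSubalgebra ℂ (Mat n)) (E : Mat n →ₗ[ℂ] Mat n) : Prop :=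
  (∀ x, E x ∈ N) ∧ (∀ x ∈ N, E x = x) ∧ (∀ x y, hsInner (E x) y = hsInner x (E y))

/-- `f` admits the integral representation
`f(x) = a + b x + ∫₀^∞ (1/(λ+x) − λ/(λ²+1)) dν(λ)` for `x > 0`, with `b ≥ 0` and
`∫ λ/(λ²+1) dν(λ) < ∞`. -/
def HasIntRep (f : ℝ → ℝ) (a b : ℝ) (ν : Measure ℝ) : Prop :=
  0 ≤ b ∧
  (∫⁻ l in Set.Ioi (0:ℝ), ENNReal.ofReal (l / (l^2 + 1)) ∂ν) < ⊤ ∧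
  ∀ x : ℝ, 0 < x →
    IntegrableOn (fun l => 1/(l + x) - l/(l^2 + 1)) (Set.Ioi 0) ν ∧
    f x = a + b*x + ∫ l in Set.Ioi (0:ℝ), (1/(l + x) - l/(l^2 + 1)) ∂ν



section Aux

open Polynomial

variable {n : ℕ}

/-- functional calculus of a Hermitian matrix -/
noncomputable def fc {A : Mat n} (hA : A.IsHermitian) (f : ℝ → ℂ) : Mat n :=
  (hA.eigenvectorUnitary : Mat n) * Matrix.diagonal (fun i => f (hA.eigenvalues i)) *
    star (hA.eigenvectorUnitary : Mat n)

lemma star_mul_cancel {A : Mat n} (hA : A.IsHermitian) (X : Mat n) :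
    star (hA.eigenvectorUnitary : Mat n) * ((hA.eigenvectorUnitary : Mat n) * X) = X := by
  rw [← Matrix.mul_assoc, Unitary.coe_star_mul_self, Matrix.one_mul]

lemma fc_mul {A : Mat n} (hA : A.IsHermitian) (f g : ℝ → ℂ) :
    fc hA f * fc hA g = fc hA (fun x => f x * g x) := by
  unfold fc
  simp only [Matrix.mul_assoc, star_mul_cancel]
  rw [← Matrix.mul_assoc (Matrix.diagonal _) (Matrix.diagonal _), Matrix.diagonal_mul_diagonal]

lemma fc_congr {A : Mat n} (hA : A.IsHermitian) {f g : ℝ → ℂ}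
    (h : ∀ i, f (hA.eigenvalues i) = g (hA.eigenvalues i)) : fc hA f = fc hA g := by
  unfold fc
  congr 2
  exact congrArg _ (funext h)

lemma fc_one {A : Mat n} (hA : A.IsHermitian) : fc hA (fun _ => 1) = 1 := by
  unfold fc
  simp [Matrix.diagonal_one, Unitary.coe_mul_star_self]

lemma fc_id {A : Mat n} (hA : A.IsHermitian) : fc hA (fun x => (x : ℂ)) = A :=
  (hA.spectral_theorem).symm

lemma fc_conjTranspose {A : Mat n} (hA : A.IsHermitian) (f : ℝ → ℂ) :
    (fc hA f)ᴴ = fc hA (fun x => starRingEnd ℂ (f x)) := by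
  unfold fc
  rw [conjTranspose_mul, conjTranspose_mul, diagonal_conjTranspose]
  simp only [Matrix.star_eq_conjTranspose, conjTranspose_conjTranspose, Matrix.mul_assoc]
  rfl

lemma fc_trace {A : Mat n} (hA : A.IsHermitian) (f : ℝ → ℂ) :
    (fc hA f).trace = ∑ i, f (hA.eigenvalues i) := by
  unfold fc
  rw [Matrix.trace_mul_comm, ← Matrix.mul_assoc, Unitary.coe_star_mul_self, Matrix.one_mul,
    Matrix.trace_diagonal]

lemma aeval_diagonal (d : Fin n → ℂ) (p : ℂ[X]) :
    Polynomial.aeval (Matrix.diagonal d) p = Matrix.diagonal (fun i => p.eval (d i)) := by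
  induction p using Polynomial.induction_on with
  | C a => simp [Matrix.algebraMap_eq_diagonal]
  | add p q hp hq => simp [hp, hq, Matrix.diagonal_add]
  | monomial k a ih =>
      rw [_root_.map_mul (aeval (Matrix.diagonal d)), aeval_C, map_pow, aeval_X,
        Matrix.algebraMap_eq_diagonal, Matrix.diagonal_pow, Matrix.diagonal_mul_diagonal]
      simp

/-- conjugation by a unitary as an algebra homomorphism -/
noncomputable def conjAlg (U : unitary (Mat n)) : Mat n →ₐ[ℂ] Mat n where
  toFun x := (U : Mat n) * x * star (U : Mat n)
  map_one' := by
    show (U : Mat n) * 1 * star (U : Mat n) = 1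
    rw [Matrix.mul_one]; exact Unitary.mul_star_self_of_mem U.2
  map_mul' x y := by
    show (U : Mat n) * (x * y) * star (U : Mat n) =
      (U : Mat n) * x * star (U : Mat n) * ((U : Mat n) * y * star (U : Mat n))
    simp only [Matrix.mul_assoc]
    rw [← Matrix.mul_assoc (star (U : Mat n)) ((U : Mat n)) _,
      Unitary.star_mul_self_of_mem U.2, Matrix.one_mul]
  map_zero' := by show (U : Mat n) * 0 * star (U : Mat n) = 0; simp
  map_add' x y := by
    show (U : Mat n) * (x + y) * star (U : Mat n) = _
    simp [Matrix.add_mul, Matrix.mul_add]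
  commutes' r := by
    show (U : Mat n) * algebraMap ℂ (Mat n) r * star (U : Mat n) = _
    rw [Algebra.algebraMap_eq_smul_one, Matrix.mul_smul, Matrix.mul_one, Matrix.smul_mul,
      Unitary.mul_star_self_of_mem U.2]

lemma fc_eq_aeval {A : Mat n} (hA : A.IsHermitian) (f : ℝ → ℂ) :
    fc hA f = Polynomial.aeval A
      (Lagrange.interpolate (Finset.image (fun i => ((hA.eigenvalues i : ℝ) : ℂ)) Finset.univ)
        id (fun z => f z.re)) := by
  set s := Finset.image (fun i => ((hA.eigenvalues i : ℝ) : ℂ)) Finset.univ with hs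
  set p := Lagrange.interpolate s id (fun z => f z.re) with hp
  have hinj : Set.InjOn id (s : Set ℂ) := fun a _ b _ h => h
  have hspec : A = conjAlg hA.eigenvectorUnitary
      (Matrix.diagonal (fun i => (hA.eigenvalues i : ℂ))) := hA.spectral_theorem
  conv_rhs => rw [hspec]
  rw [Polynomial.aeval_algHom_apply, aeval_diagonal]
  show fc hA f = (hA.eigenvectorUnitary : Mat n) *
      Matrix.diagonal (fun i => p.eval ((hA.eigenvalues i : ℂ))) *
      star (hA.eigenvectorUnitary : Mat n)
  unfold fc
  congr 2
  refine congrArg _ (funext fun i => ?_)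
  have hmem : ((hA.eigenvalues i : ℝ) : ℂ) ∈ s := Finset.mem_image_of_mem _ (Finset.mem_univ i)
  have := Lagrange.eval_interpolate_at_node (fun z => f z.re) hinj hmem
  simp only [id] at this
  rw [hp, this]
  simp

lemma fc_mem {N : StarSubalgebra ℂ (Mat n)} {A : Mat n} (hA : A.IsHermitian) (hAN : A ∈ N)
    (f : ℝ → ℂ) : fc hA f ∈ N := by
  rw [fc_eq_aeval]
  have h2 : Algebra.adjoin ℂ {A} ≤ N.toSubalgebra :=
    Algebra.adjoin_le (Set.singleton_subset_iff.mpr hAN)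
  exact h2 (Polynomial.aeval_mem_adjoin_singleton (R := ℂ) (x := A))

lemma isUnit_conjTranspose {B : Mat n} (hB : IsUnit B) : IsUnit Bᴴ := by
  rw [Matrix.isUnit_iff_isUnit_det] at hB ⊢
  rw [Matrix.det_conjTranspose, isUnit_iff_ne_zero, ne_eq, star_eq_zero]
  exact isUnit_iff_ne_zero.mp hB

lemma posDef_conj {D : Mat n} (hD : D.PosDef) (B : Mat n) (hB : IsUnit B) :
    (B * D * Bᴴ).PosDef := by
  have hBH : IsUnit Bᴴ := isUnit_conjTranspose hB
  rw [posDef_iff_dotProduct_mulVec]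
  constructor
  · have := Matrix.isHermitian_conjTranspose_mul_mul Bᴴ hD.1
    rwa [conjTranspose_conjTranspose] at this
  · intro x hx
    have hy : Bᴴ *ᵥ x ≠ 0 := by
      intro h
      apply hx
      have := Matrix.mulVec_injective_iff_isUnit.mpr hBH
      exact this (by simpa using h)
    have : star x ⬝ᵥ (B * D * Bᴴ) *ᵥ x = star (Bᴴ *ᵥ x) ⬝ᵥ D *ᵥ (Bᴴ *ᵥ x) := by
      rw [← Matrix.mulVec_mulVec, ← Matrix.mulVec_mulVec, Matrix.dotProduct_mulVec (star x),
        Matrix.star_mulVec, conjTranspose_conjTranspose]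
    rw [this]
    exact hD.dotProduct_mulVec_pos hy

lemma fc_posDef {A : Mat n} (hA : A.IsHermitian) (g : ℝ → ℝ)
    (hg : ∀ i, 0 < g (hA.eigenvalues i)) : (fc hA (fun x => ((g x : ℝ) : ℂ))).PosDef := by
  have hU : IsUnit (hA.eigenvectorUnitary : Mat n) := by
    have h1 : (hA.eigenvectorUnitary : Mat n) * star (hA.eigenvectorUnitary : Mat n) = 1 :=
      Matrix.mem_unitaryGroup_iff.mp hA.eigenvectorUnitary.2
    have h2 : star (hA.eigenvectorUnitary : Mat n) * (hA.eigenvectorUnitary : Mat n) = 1 :=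
      Matrix.mem_unitaryGroup_iff'.mp hA.eigenvectorUnitary.2
    exact ⟨⟨_, star (hA.eigenvectorUnitary : Mat n), h1, h2⟩, rfl⟩
  have hdiag : (Matrix.diagonal (fun i => ((g (hA.eigenvalues i) : ℝ) : ℂ))).PosDef :=
    Matrix.PosDef.diagonal fun i => by
      rw [Complex.zero_lt_real]; exact hg i
  have := posDef_conj hdiag (hA.eigenvectorUnitary : Mat n) hU
  rw [← Matrix.star_eq_conjTranspose] at this
  exact this

lemma posDef_of_eigenvalues_pos {A : Mat n} (hA : A.IsHermitian)
    (h : ∀ i, 0 < hA.eigenvalues i) : A.PosDef := by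
  have hfc : A = fc hA (fun x => ((x : ℝ) : ℂ)) := (fc_id hA).symm
  rw [hfc]
  exact fc_posDef hA (fun x => x) h

set_option maxHeartbeats 1000000 in
lemma mpow_eq_fc {A : Mat n} (hA : A.IsHermitian) (z : ℂ) :
    mpow A z = fc hA (fun x => (x : ℂ) ^ z) := by
  unfold mpow fc
  rw [dif_pos hA]

lemma mpow_real {A : Mat n} (hA : A.PosDef) (t : ℝ) :
    mpow A (t : ℂ) = fc hA.1 (fun x => ((x ^ t : ℝ) : ℂ)) := by
  rw [mpow_eq_fc hA.1]
  exact fc_congr hA.1 fun i => (Complex.ofReal_cpow (hA.eigenvalues_pos i).le t).symm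

lemma mpow_real_isHermitian {A : Mat n} (hA : A.PosDef) (t : ℝ) :
    (mpow A (t : ℂ))ᴴ = mpow A (t : ℂ) := by
  rw [mpow_real hA, fc_conjTranspose]
  exact fc_congr hA.1 fun i => Complex.conj_ofReal _

lemma mpow_real_posDef {A : Mat n} (hA : A.PosDef) (t : ℝ) : (mpow A (t : ℂ)).PosDef := by
  rw [mpow_real hA]
  exact fc_posDef hA.1 (fun x => x ^ t) fun i => Real.rpow_pos_of_pos (hA.eigenvalues_pos i) t

lemma mpow_add {A : Mat n} (hA : A.PosDef) (y z : ℂ) :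
    mpow A y * mpow A z = mpow A (y + z) := by
  rw [mpow_eq_fc hA.1, mpow_eq_fc hA.1, mpow_eq_fc hA.1, fc_mul]
  exact fc_congr hA.1 fun i =>
    (Complex.cpow_add _ _ (by exact_mod_cast (hA.eigenvalues_pos i).ne')).symm

lemma mpow_one' {A : Mat n} (hA : A.IsHermitian) : mpow A 1 = A := by
  rw [mpow_eq_fc hA]
  rw [fc_congr hA (g := fun x => (x : ℂ)) fun i => Complex.cpow_one _]
  exact fc_id hA

lemma mpow_zero' {A : Mat n} (hA : A.IsHermitian) : mpow A 0 = 1 := by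
  rw [mpow_eq_fc hA]
  rw [fc_congr hA (g := fun _ => 1) fun i => Complex.cpow_zero _]
  exact fc_one hA

lemma trace_mul_conjTranspose_self (A : Mat n) :
    (A * Aᴴ).trace = ((∑ i, ∑ j, Complex.normSq (A i j) : ℝ) : ℂ) := by
  rw [Matrix.trace]
  push_cast
  refine Finset.sum_congr rfl fun i _ => ?_
  rw [Matrix.diag_apply, Matrix.mul_apply]
  refine Finset.sum_congr rfl fun j _ => ?_
  rw [Matrix.conjTranspose_apply, Complex.star_def, Complex.mul_conj]

lemma eq_zero_of_trace_mul_conjTranspose_self {A : Mat n}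
    (h : (A * Aᴴ).trace = 0) : A = 0 := by
  rw [trace_mul_conjTranspose_self] at h
  have h' : (∑ i, ∑ j, Complex.normSq (A i j) : ℝ) = 0 := by exact_mod_cast h
  have hnn : ∀ i ∈ (Finset.univ : Finset (Fin n)), 0 ≤ ∑ j, Complex.normSq (A i j) :=
    fun i _ => Finset.sum_nonneg fun j _ => Complex.normSq_nonneg _
  ext i j
  have hi := (Finset.sum_eq_zero_iff_of_nonneg hnn).mp h' i (Finset.mem_univ i)
  have hj := (Finset.sum_eq_zero_iff_of_nonneg
    (fun j _ => Complex.normSq_nonneg (A i j))).mp hi j (Finset.mem_univ j)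
  simpa using Complex.normSq_eq_zero.mp hj

end Aux

/-- Lemma `omega`: intertwining of relative modular operators by the
isometry `V_ρ : y ↦ y ρ_N^{−1/2} ρ^{1/2}`.
Let `ω_N` be a faithful state of `N` and `ω := R_ρ(ω_N) = ρ^{1/2} ρ_N^{−1/2} ω_N ρ_N^{−1/2} ρ^{1/2}`.
Then `ω` is a faithful state of `M`, and for all `a, b ∈ N`,
`tr((a ρ_N^{−1/2} ρ^{1/2})* σ (b ρ_N^{−1/2} ρ^{1/2}) ω⁻¹) = tr(a* σ_N b ω_N⁻¹)`,
i.e. `V_ρ* ∘ Δ_M(σ,ω) ∘ V_ρ = Δ_N(σ_N,ω_N)`. -/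
theorem stmt13 (n : ℕ) (N : StarSubalgebra ℂ (Mat n)) (E : Mat n →ₗ[ℂ] Mat n)
    (hE : IsCondExp N E)
    (ρ σ : Mat n) (hρ : ρ.PosDef) (hρ1 : ρ.trace = 1) (hσ : σ.PosDef) (hσ1 : σ.trace = 1)
    (ωN : Mat n) (hωN : ωN ∈ N) (hωN' : ωN.PosDef) (hωN1 : ωN.trace = 1)
    (ω : Mat n) (hω : ω = mpow ρ (1/2) * mpow (E ρ) (-(1/2)) * ωN * mpow (E ρ) (-(1/2)) * mpow ρ (1/2)) :
    (ω.PosDef ∧ ω.trace = 1) ∧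
    ∀ a b : Mat n, a ∈ N → b ∈ N →
      ((a * mpow (E ρ) (-(1/2)) * mpow ρ (1/2))ᴴ * σ *
          (b * mpow (E ρ) (-(1/2)) * mpow ρ (1/2)) * ω⁻¹).trace =
        (aᴴ * (E σ) * b * ωN⁻¹).trace := by
  obtain ⟨hmemN, hfix, hadj⟩ := hE
  -- the fundamental trace property of the conditional expectation
  have traceE : ∀ c, c ∈ N → ∀ x : Mat n, (c * E x).trace = (c * x).trace := by
    intro c hc x
    have h1 := hadj cᴴ x
    rw [hfix cᴴ (by exact star_mem hc)] at h1
    simpa [hsInner, conjTranspose_conjTranspose] using h1.symm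
  -- E commutes with the star operation
  have Estar : ∀ x : Mat n, E xᴴ = (E x)ᴴ := by
    intro x
    set d := E xᴴ - (E x)ᴴ with hd
    have hdN : d ∈ N := sub_mem (hmemN _) (by exact star_mem (hmemN x))
    have key : ∀ c, c ∈ N → (cᴴ * d).trace = 0 := by
      intro c hc
      have hcH : cᴴ ∈ N := by exact star_mem hc
      have t1 : (cᴴ * E xᴴ).trace = (cᴴ * xᴴ).trace := traceE cᴴ hcH _
      have t2 : (cᴴ * (E x)ᴴ).trace = (cᴴ * xᴴ).trace := by
        calc (cᴴ * (E x)ᴴ).trace = ((E x * c)ᴴ).trace := by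
              rw [Matrix.conjTranspose_mul]
          _ = star ((E x * c).trace) := Matrix.trace_conjTranspose _
          _ = star ((c * E x).trace) := by rw [Matrix.trace_mul_comm]
          _ = star ((c * x).trace) := by rw [traceE c hc x]
          _ = star ((x * c).trace) := by rw [Matrix.trace_mul_comm]
          _ = ((x * c)ᴴ).trace := (Matrix.trace_conjTranspose _).symm
          _ = (cᴴ * xᴴ).trace := by rw [Matrix.conjTranspose_mul]
      rw [hd, Matrix.mul_sub, Matrix.trace_sub, t1, t2, sub_self]
    have h0 : (d * dᴴ).trace = 0 := by
      have hk := key d hdN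
      rwa [Matrix.trace_mul_comm] at hk
    have hd0 : d = 0 := eq_zero_of_trace_mul_conjTranspose_self h0
    have := sub_eq_zero.mp (hd ▸ hd0)
    exact this
  have hEρH : (E ρ).IsHermitian := by
    show (E ρ)ᴴ = E ρ
    rw [← Estar ρ, show ρᴴ = ρ from hρ.1]
  -- facts about r := mpow ρ (1/2)
  have e12 : (1/2 : ℂ) = ((1/2 : ℝ) : ℂ) := by norm_num
  have hrP : (mpow ρ (1/2)).PosDef := by rw [e12]; exact mpow_real_posDef hρ _
  have hrH : (mpow ρ (1/2))ᴴ = mpow ρ (1/2) := by rw [e12]; exact mpow_real_isHermitian hρ _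
  have hr2 : mpow ρ (1/2) * mpow ρ (1/2) = ρ := by
    rw [mpow_add hρ, show (1/2 + 1/2 : ℂ) = 1 by norm_num, mpow_one' hρ.1]
  have hrd : IsUnit (mpow ρ (1/2)).det := (Matrix.isUnit_iff_isUnit_det _).mp hrP.isUnit
  -- E ρ is positive definite
  have hEρ : (E ρ).PosDef := by
    refine posDef_of_eigenvalues_pos hEρH (fun j => ?_)
    by_contra hneg
    push_neg at hneg
    set f : ℝ → ℂ := fun x => if x = hEρH.eigenvalues j then 1 else 0 with hf
    set P := fc hEρH f with hP
    have hPN : P ∈ N := fc_mem hEρH (hmemN ρ) f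
    have hPP : P * P = P := by
      rw [hP, fc_mul]
      exact fc_congr hEρH fun i => by
        by_cases h : hEρH.eigenvalues i = hEρH.eigenvalues j <;> simp [hf, h]
    have hPH : Pᴴ = P := by
      rw [hP, fc_conjTranspose]
      exact fc_congr hEρH fun i => by
        by_cases h : hEρH.eigenvalues i = hEρH.eigenvalues j <;> simp [hf, h]
    have hPne : P ≠ 0 := by
      intro h0
      have htr : P.trace = 0 := by rw [h0, Matrix.trace_zero]
      rw [hP, fc_trace] at htr
      have : (∑ i, if hEρH.eigenvalues i = hEρH.eigenvalues j then (1:ℂ) else 0) = 0 := htr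
      rw [Finset.sum_boole] at this
      have hjmem : j ∈ Finset.univ.filter (fun i => hEρH.eigenvalues i = hEρH.eigenvalues j) :=
        Finset.mem_filter.mpr ⟨Finset.mem_univ j, rfl⟩
      have hcard : (Finset.univ.filter
          (fun i => hEρH.eigenvalues i = hEρH.eigenvalues j)).card ≠ 0 :=
        Finset.card_ne_zero_of_mem hjmem
      exact hcard (by exact_mod_cast this)
    -- trace of P * E ρ is a nonpositive real
    have key1 : (P * E ρ).trace =
        ((∑ i, if hEρH.eigenvalues i = hEρH.eigenvalues j then hEρH.eigenvalues i else 0 : ℝ) : ℂ) := by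
      have hEfc : E ρ = fc hEρH (fun x => (x : ℂ)) := (fc_id hEρH).symm
      have hPE : P * E ρ = fc hEρH (fun x => f x * (x : ℂ)) := by
        conv_lhs => rw [hEfc]
        rw [hP, fc_mul]
      rw [hPE, fc_trace]
      push_cast
      refine Finset.sum_congr rfl fun i _ => ?_
      by_cases h : hEρH.eigenvalues i = hEρH.eigenvalues j <;> simp [hf, h]
    -- trace of P * ρ is a positive real
    have key2 : (P * ρ).trace = ((P * mpow ρ (1/2)) * (P * mpow ρ (1/2))ᴴ).trace := by
      rw [Matrix.conjTranspose_mul, hrH, hPH]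
      have h1 : P * mpow ρ (1/2) * (mpow ρ (1/2) * P) = P * (ρ * P) := by
        rw [Matrix.mul_assoc P, ← Matrix.mul_assoc (mpow ρ (1/2)), hr2]
      rw [h1]
      calc (P * ρ).trace = ((P * P) * ρ).trace := by rw [hPP]
        _ = ((P * ρ) * P).trace := by
            conv_lhs => rw [Matrix.mul_assoc, Matrix.trace_mul_comm]
        _ = (P * (ρ * P)).trace := by rw [Matrix.mul_assoc]
    have key3 : (P * E ρ).trace = (P * ρ).trace := traceE P hPN ρ
    set s : ℝ := ∑ i, if hEρH.eigenvalues i = hEρH.eigenvalues j then hEρH.eigenvalues i else 0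
      with hs
    set S : ℝ := ∑ i, ∑ k, Complex.normSq ((P * mpow ρ (1/2)) i k) with hS
    have hsS : s = S := by
      have : (s : ℂ) = (S : ℂ) := by
        rw [← key1, key3, key2, trace_mul_conjTranspose_self]
      exact_mod_cast this
    have hs0 : s ≤ 0 := by
      rw [hs]
      refine Finset.sum_nonpos fun i _ => ?_
      by_cases h : hEρH.eigenvalues i = hEρH.eigenvalues j
      · simpa [h] using hneg
      · simp [h]
    have hS0 : 0 ≤ S := Finset.sum_nonneg fun i _ =>
      Finset.sum_nonneg fun k _ => Complex.normSq_nonneg _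
    have hSz : S = 0 := le_antisymm (hsS ▸ hs0) hS0
    have hPr0 : P * mpow ρ (1/2) = 0 := by
      apply eq_zero_of_trace_mul_conjTranspose_self
      rw [trace_mul_conjTranspose_self, ← hS, hSz]
      norm_num
    apply hPne
    have : P * (mpow ρ (1/2) * (mpow ρ (1/2))⁻¹) = 0 := by
      rw [← Matrix.mul_assoc, hPr0, Matrix.zero_mul]
    rwa [Matrix.mul_nonsing_inv _ hrd, Matrix.mul_one] at this
  -- facts about q := mpow (E ρ) (-(1/2))
  have em12 : (-(1/2) : ℂ) = ((-(1/2) : ℝ) : ℂ) := by norm_num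
  have hqP : (mpow (E ρ) (-(1/2))).PosDef := by rw [em12]; exact mpow_real_posDef hEρ _
  have hqH : (mpow (E ρ) (-(1/2)))ᴴ = mpow (E ρ) (-(1/2)) := by
    rw [em12]; exact mpow_real_isHermitian hEρ _
  have hqd : IsUnit (mpow (E ρ) (-(1/2))).det := (Matrix.isUnit_iff_isUnit_det _).mp hqP.isUnit
  have hqmem : mpow (E ρ) (-(1/2)) ∈ N := by
    rw [mpow_eq_fc hEρ.1]; exact fc_mem hEρ.1 (hmemN ρ) _
  have hq1 : mpow (E ρ) (-(1/2)) * (E ρ * mpow (E ρ) (-(1/2))) = 1 := by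
    have h1 := mpow_add hEρ 1 (-(1/2))
    rw [mpow_one' hEρ.1] at h1
    rw [h1, mpow_add hEρ, show (-(1/2) + (1 + -(1/2)) : ℂ) = 0 by ring, mpow_zero' hEρ.1]
  have hωNd : IsUnit ωN.det := (Matrix.isUnit_iff_isUnit_det _).mp hωN'.isUnit
  set r := mpow ρ (1/2) with hrdef
  set q := mpow (E ρ) (-(1/2)) with hqdef
  -- ω is positive definite
  have hωP : ω.PosDef := by
    rw [hω]
    have hBu : IsUnit (r * q) := hrP.isUnit.mul hqP.isUnit
    have := posDef_conj hωN' (r * q) hBu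
    rw [Matrix.conjTranspose_mul, hrH, hqH] at this
    simpa only [Matrix.mul_assoc] using this
  -- ω has trace 1
  have hqωq : q * (ωN * q) ∈ N := mul_mem hqmem (mul_mem hωN hqmem)
  have hωtr : ω.trace = 1 := by
    rw [hω]
    calc (r * q * ωN * q * r).trace
        = ((r * r) * (q * (ωN * q))).trace := by
          rw [Matrix.trace_mul_comm]
          simp only [Matrix.mul_assoc]
      _ = ((q * (ωN * q)) * ρ).trace := by rw [hr2, Matrix.trace_mul_comm]
      _ = ((q * (ωN * q)) * (E ρ)).trace := (traceE _ hqωq ρ).symm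
      _ = (ωN * (q * (E ρ * q))).trace := by
          conv_lhs =>
            rw [show (q * (ωN * q)) * (E ρ) = q * (ωN * (q * (E ρ)))
              by simp only [Matrix.mul_assoc]]
            rw [Matrix.trace_mul_comm]
          simp only [Matrix.mul_assoc]
      _ = ωN.trace := by
          rw [show E ρ * q = E ρ * mpow (E ρ) (-(1/2)) from rfl, hq1, Matrix.mul_one]
      _ = 1 := hωN1
  refine ⟨⟨hωP, hωtr⟩, ?_⟩
  intro a b ha hb
  -- ωN⁻¹ belongs to N
  have hωNinvN : ωN⁻¹ ∈ N := by
    have hfc : ωN * fc hωN'.1 (fun x => (x : ℂ)⁻¹) = 1 := by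
      have h1 := fc_mul hωN'.1 (fun x => (x : ℂ)) (fun x => (x : ℂ)⁻¹)
      rw [fc_id hωN'.1] at h1
      rw [h1, fc_congr hωN'.1 (g := fun _ => 1) fun i =>
        mul_inv_cancel₀ (by exact_mod_cast (hωN'.eigenvalues_pos i).ne')]
      exact fc_one _
    rw [Matrix.inv_eq_right_inv hfc]
    exact fc_mem _ hωN _
  -- cancellation lemmas
  have crL : ∀ X : Mat n, r * (r⁻¹ * X) = X := fun X => by
    rw [← Matrix.mul_assoc, Matrix.mul_nonsing_inv _ hrd, Matrix.one_mul]
  have cqL : ∀ X : Mat n, q * (q⁻¹ * X) = X := fun X => by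
    rw [← Matrix.mul_assoc, Matrix.mul_nonsing_inv _ hqd, Matrix.one_mul]
  have cwL : ∀ X : Mat n, ωN * (ωN⁻¹ * X) = X := fun X => by
    rw [← Matrix.mul_assoc, Matrix.mul_nonsing_inv _ hωNd, Matrix.one_mul]
  have hrr : r * r⁻¹ = 1 := Matrix.mul_nonsing_inv _ hrd
  have hωinv : ω⁻¹ = r⁻¹ * (q⁻¹ * (ωN⁻¹ * (q⁻¹ * r⁻¹))) := by
    apply Matrix.inv_eq_right_inv
    rw [hω]
    simp only [Matrix.mul_assoc, crL, cqL, cwL, hrr]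
  -- cyclicity helper
  have cyc : ∀ (Y M : Mat n), IsUnit Y.det → (Y * (M * Y⁻¹)).trace = M.trace := by
    intro Y M hY
    rw [Matrix.trace_mul_comm, Matrix.mul_assoc, Matrix.nonsing_inv_mul _ hY, Matrix.mul_one]
  have hconj : (a * q * r)ᴴ = r * (q * aᴴ) := by
    rw [Matrix.conjTranspose_mul, Matrix.conjTranspose_mul, hrH, hqH]
  have hrqd : IsUnit (r * q).det := (Matrix.isUnit_iff_isUnit_det _).mp (hrP.isUnit.mul hqP.isUnit)
  have hlhs : (a * q * r)ᴴ * σ * (b * q * r) * ω⁻¹ =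
      (r * q) * ((aᴴ * σ * b * ωN⁻¹) * (r * q)⁻¹) := by
    rw [hconj, hωinv, Matrix.mul_inv_rev]
    simp only [Matrix.mul_assoc, crL, cqL, cwL]
  have cyc2 : ∀ X : Mat n, (aᴴ * X * b * ωN⁻¹).trace = ((b * (ωN⁻¹ * aᴴ)) * X).trace := by
    intro X
    rw [show aᴴ * X * b * ωN⁻¹ = (aᴴ * X) * (b * ωN⁻¹) by rw [Matrix.mul_assoc],
      Matrix.trace_mul_comm]
    simp only [Matrix.mul_assoc]
  have hcN : b * (ωN⁻¹ * aᴴ) ∈ N := mul_mem hb (mul_mem hωNinvN (by exact star_mem ha))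
  calc ((a * q * r)ᴴ * σ * (b * q * r) * ω⁻¹).trace
      = (aᴴ * σ * b * ωN⁻¹).trace := by rw [hlhs]; exact cyc _ _ hrqd
    _ = ((b * (ωN⁻¹ * aᴴ)) * σ).trace := cyc2 σ
    _ = ((b * (ωN⁻¹ * aᴴ)) * (E σ)).trace := (traceE _ hcN σ).symm
    _ = (aᴴ * (E σ) * b * ωN⁻¹).trace := (cyc2 (E σ)).symm


end QFDiv
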